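/- Let S ⊆ {−,+}^n contain the all-plus and all-minus vectors, and suppose S is d-realisable by an arrangement of n oriented hyperplanes in ℝ^d. Then the profile V_S (with one voter per σ ∈ S whose order is {a_1,b_1} ≻ ⋯ ≻ {a_n,b_n} with a_i ≻ b_i iff σ_i = +) is d-Euclidean. -/

import Mathlib

set_option maxHeartbeats 1000000


/-- If S (containing the all-plus and all-minus vectors) is d-realisable by
an arrangement of n oriented affine hyperplanes, then the profile V_S (alternative a_i is
(i, true), b_i is (i, false); voter σ prefers (i,s) to (j,t) iff i < j, or i = j with
s = σᵢ ≠ t) is d-Euclidean. -/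
theorem stmt_9 (d n : ℕ) (S : Set (Fin n → Bool))
    (hplus : (fun _ => true) ∈ S) (hminus : (fun _ => false) ∈ S)
    (c : Fin n → EuclideanSpace ℝ (Fin d)) (β : Fin n → ℝ) (hc : ∀ i, c i ≠ 0)
    (hreal : ∀ σ ∈ S, ∃ p : EuclideanSpace ℝ (Fin d),
      ∀ i, if σ i then β i < (inner ℝ (c i) p : ℝ) else (inner ℝ (c i) p : ℝ) < β i) :
    ∃ x : {σ // σ ∈ S} ⊕ (Fin n × Bool) → EuclideanSpace ℝ (Fin d),
      ∀ (σ : {σ // σ ∈ S}) (i j : Fin n) (s t : Bool),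
        (i < j ∨ (i = j ∧ s = σ.1 i ∧ t ≠ σ.1 i)) →
        ‖x (Sum.inl σ) - x (Sum.inr (i, s))‖ < ‖x (Sum.inl σ) - x (Sum.inr (j, t))‖ := by
  classical
  choose p hp using fun σ : {σ // σ ∈ S} => hreal σ.1 σ.2
  set u : Fin n → EuclideanSpace ℝ (Fin d) := fun i => ‖c i‖⁻¹ • c i with hu_def
  have hcn : ∀ i, (0:ℝ) < ‖c i‖ := fun i => norm_pos_iff.mpr (hc i)
  have hu : ∀ i, ‖u i‖ = 1 := by
    intro i
    rw [hu_def]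
    simp [norm_smul, abs_of_nonneg (inv_nonneg.mpr (norm_nonneg (c i))),
      inv_mul_cancel₀ (hcn i).ne']
  set q : Fin n → EuclideanSpace ℝ (Fin d) := fun i => (β i / ‖c i‖) • u i with hq_def
  haveI : Finite {σ // σ ∈ S} := (Set.toFinite S).to_subtype
  obtain ⟨M, hM⟩ : ∃ M : ℝ, ∀ y : {σ // σ ∈ S} × Fin n, ‖p y.1 - q y.2‖ ≤ M :=
    Finite.exists_le _
  set M0 := max M 0 with hM0def
  have hM0nn : (0:ℝ) ≤ M0 := le_max_right _ _
  have hMb : ∀ (σ : {σ // σ ∈ S}) i, ‖p σ - q i‖ ≤ M0 :=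
    fun σ i => (hM ⟨σ, i⟩).trans (le_max_left _ _)
  set R : Fin n → ℝ := fun i => (2*M0+1) * ((i:ℝ)+1) with hRdef
  have hRpos : ∀ i, 0 < R i := by
    intro i; rw [hRdef]; positivity
  have key : ∀ (w v : EuclideanSpace ℝ (Fin d)) (e : ℝ), ‖v‖ = 1 →
      ‖w - e • v‖^2 = ‖w‖^2 - 2*e*(inner ℝ w v : ℝ) + e^2 := by
    intro w v e hv
    rw [norm_sub_sq_real, real_inner_smul_right, norm_smul, hv, Real.norm_eq_abs]
    rw [mul_one, sq_abs]
    ring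
  have hinner : ∀ (σ : {σ // σ ∈ S}) i,
      (inner ℝ (p σ - q i) (u i) : ℝ) = ‖c i‖⁻¹ * ((inner ℝ (c i) (p σ) : ℝ) - β i) := by
    intro σ i
    rw [inner_sub_left, hq_def, hu_def]
    simp only [real_inner_smul_left, real_inner_smul_right]
    rw [real_inner_self_eq_norm_mul_norm, real_inner_comm]
    have hne : ‖c i‖ ≠ 0 := (hcn i).ne'
    field_simp
  refine ⟨Sum.elim (fun σ => p σ)
    (fun is => q is.1 + (if is.2 then R is.1 else -R is.1) • u is.1), ?_⟩
  intro σ i j s t hcase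
  simp only [Sum.elim_inl, Sum.elim_inr]
  have hrw : ∀ (k : Fin n) (b : Bool),
      p σ - (q k + (if b then R k else -R k) • u k)
        = (p σ - q k) - (if b then R k else -R k) • u k := by
    intro k b; abel
  rcases hcase with hij | ⟨rfl, hs, ht⟩
  · -- cross pair: i < j
    have habs : ∀ (k : Fin n) (b : Bool), ‖(if b then R k else -R k : ℝ)‖ = R k := by
      intro k b; cases b <;> simp [Real.norm_eq_abs, abs_of_pos (hRpos k)]
    have h1 : ‖p σ - (q i + (if s then R i else -R i) • u i)‖ ≤ M0 + R i := by
      rw [hrw]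
      refine (norm_sub_le _ _).trans ?_
      rw [norm_smul, hu i, mul_one, habs]
      exact add_le_add_left (hMb σ i) _
    have h2 : R j - M0 ≤ ‖p σ - (q j + (if t then R j else -R j) • u j)‖ := by
      rw [hrw, norm_sub_rev]
      have := norm_sub_norm_le ((if t then R j else -R j) • u j) (p σ - q j)
      rw [norm_smul, hu j, mul_one, habs] at this
      have h3 := hMb σ j
      linarith
    have hji : (i:ℝ) + 1 ≤ (j:ℝ) := by exact_mod_cast (Fin.lt_iff_val_lt_val.mp hij)
    have : M0 + R i < R j - M0 := by
      rw [hRdef]; simp only; nlinarith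
    linarith
  · -- within pair: i = j, s = σ i, t ≠ σ i
    subst hs
    have htval : t = !(σ.1 i) := by
      cases t <;> cases h : σ.1 i <;> simp_all
    subst htval
    have hsign := hp σ i
    have hw := hinner σ i
    have hinv := inv_pos.mpr (hcn i)
    refine lt_of_pow_lt_pow_left₀ 2 (norm_nonneg _) ?_
    rw [hrw, hrw]
    cases h : σ.1 i
    · rw [h] at hsign
      simp only [h, Bool.not_false, if_false, if_true, Bool.false_eq_true, if_neg,
        Bool.true_eq_false] at hsign ⊢
      have hneg : (inner ℝ (p σ - q i) (u i) : ℝ) < 0 := by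
        rw [hw]
        exact mul_neg_of_pos_of_neg hinv (by linarith)
      have e1 : ‖p σ - q i - (-R i) • u i‖^2
          = ‖p σ - q i‖^2 - 2*(-R i)*(inner ℝ (p σ - q i) (u i) : ℝ) + (-R i)^2 :=
        key _ _ _ (hu i)
      have e2 : ‖p σ - q i - (R i) • u i‖^2
          = ‖p σ - q i‖^2 - 2*(R i)*(inner ℝ (p σ - q i) (u i) : ℝ) + (R i)^2 :=
        key _ _ _ (hu i)
      rw [e1, e2]
      nlinarith [mul_pos (hRpos i) (neg_pos.mpr hneg)]
    · rw [h] at hsign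
      simp only [h, Bool.not_true, if_true, if_false, Bool.false_eq_true, if_neg,
        Bool.true_eq_false] at hsign ⊢
      have hpos : (0:ℝ) < (inner ℝ (p σ - q i) (u i) : ℝ) := by
        rw [hw]
        exact mul_pos hinv (by linarith)
      have e1 : ‖p σ - q i - (R i) • u i‖^2
          = ‖p σ - q i‖^2 - 2*(R i)*(inner ℝ (p σ - q i) (u i) : ℝ) + (R i)^2 :=
        key _ _ _ (hu i)
      have e2 : ‖p σ - q i - (-R i) • u i‖^2
          = ‖p σ - q i‖^2 - 2*(-R i)*(inner ℝ (p σ - q i) (u i) : ℝ) + (-R i)^2 :=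
        key _ _ _ (hu i)
      rw [e1, e2]
      nlinarith [mul_pos (hRpos i) hpos]
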